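/- Fix c > 0 and set u_n := (c+2)^{|n|·sin((π/2)·log₂(1+|n|))} for n ∈ ℤ. For k ∈ ℕ set n_k := 2^{1+4k} − 1 and m_k := 2^{3+4k} − 1. Then u_{n_k} = u_{−n_k} = (c+2)^{n_k} and u_{m_k}⁻¹ = u_{−m_k}⁻¹ = (c+2)^{m_k} for all k ≥ 1. Consequently, there is no constant M' ≥ 0 such that u_N ≤ M'·(c+1)^N for all N ∈ ℕ; likewise there is no M' with u_N⁻¹ ≤ M'·(c+1)^N for all N ∈ ℕ, none with u_{−N} ≤ M'·(c+1)^N for all N ∈ ℕ, and none with u_{−N}⁻¹ ≤ M'·(c+1)^N for all N ∈ ℕ. -/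

import Mathlib

noncomputable section
open Real

lemma sin1' (k : ℕ) : Real.sin (Real.pi / 2 * ((1 + 4 * k : ℕ) : ℝ)) = 1 := by
  have h : Real.pi / 2 * ((1 + 4 * k : ℕ) : ℝ) = Real.pi / 2 + k * (2 * Real.pi) := by
    push_cast; ring
  rw [h, Real.sin_add_nat_mul_two_pi, Real.sin_pi_div_two]

lemma sin3' (k : ℕ) : Real.sin (Real.pi / 2 * ((3 + 4 * k : ℕ) : ℝ)) = -1 := by
  have h : Real.pi / 2 * ((3 + 4 * k : ℕ) : ℝ) = (Real.pi / 2 + Real.pi) + k * (2 * Real.pi) := by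
    push_cast; ring
  rw [h, Real.sin_add_nat_mul_two_pi, Real.sin_add_pi, Real.sin_pi_div_two]

lemma uval' (c : ℝ) (u : ℤ → ℝ)
    (hu : ∀ n : ℤ,
      u n = (c + 2) ^ (|(n : ℝ)| * Real.sin (Real.pi / 2 * Real.logb 2 (1 + |(n : ℝ)|))))
    (j : ℕ) (n : ℤ) (hn : |(n : ℝ)| = (2 : ℝ) ^ j - 1) :
    u n = (c + 2) ^ (((2 : ℝ) ^ j - 1) * Real.sin (Real.pi / 2 * (j : ℝ))) := by
  rw [hu n, hn]
  have h2 : (1 : ℝ) + ((2 : ℝ) ^ j - 1) = 2 ^ j := by ring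
  rw [h2]
  have h3 : Real.logb 2 ((2 : ℝ) ^ j) = (j : ℝ) := by
    rw [Real.logb_pow]; simp
  rw [h3]

lemma no_bound' (c : ℝ) (hc : 0 < c) (v : ℕ → ℝ)
    (hv : ∀ n : ℕ, ∃ N : ℕ, n ≤ N ∧ v N = (c + 2) ^ (N : ℝ)) :
    ¬ ∃ M' : ℝ, 0 ≤ M' ∧ ∀ N : ℕ, v N ≤ M' * (c + 1) ^ N := by
  rintro ⟨M', hM0, hM⟩
  have hc1 : (0 : ℝ) < c + 1 := by linarith
  have hr : 1 < (c + 2) / (c + 1) := by rw [lt_div_iff₀ hc1]; linarith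
  obtain ⟨n, hn⟩ := pow_unbounded_of_one_lt M' hr
  obtain ⟨N, hnN, hvN⟩ := hv n
  have h1 : M' < ((c + 2) / (c + 1)) ^ N :=
    lt_of_lt_of_le hn (pow_le_pow_right₀ hr.le hnN)
  have h2 : ((c + 2) / (c + 1)) ^ N * (c + 1) ^ N = (c + 2) ^ N := by
    rw [← mul_pow]; congr 1; field_simp
  have h3 := hM N
  rw [hvN, Real.rpow_natCast] at h3
  have h4 := mul_lt_mul_of_pos_right h1 (pow_pos hc1 N)
  rw [h2] at h4
  linarith

/-- For the weights `u n = (c+2) ^ (|n|·sin((π/2)·log₂(1+|n|)))` and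
`n_k = 2^(1+4k) − 1`, `m_k = 2^(3+4k) − 1` (`k ≥ 1`), one has
`u (±n_k) = (c+2)^(n_k)` and `u (±m_k)⁻¹ = (c+2)^(m_k)`; consequently no bound of the form
`u (±N)^(±1) ≤ M'·(c+1)^N` (for all `N ∈ ℕ`) can hold. -/
theorem stmt11 (c : ℝ) (hc : 0 < c)
    (u : ℤ → ℝ)
    (hu : ∀ n : ℤ,
      u n = (c + 2) ^ (|(n : ℝ)| * Real.sin (Real.pi / 2 * Real.logb 2 (1 + |(n : ℝ)|)))) :
    (∀ k : ℕ, 1 ≤ k →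
      u ((2 ^ (1 + 4 * k) - 1 : ℤ)) = (c + 2) ^ ((2 : ℝ) ^ (1 + 4 * k) - 1) ∧
      u (-(2 ^ (1 + 4 * k) - 1 : ℤ)) = (c + 2) ^ ((2 : ℝ) ^ (1 + 4 * k) - 1) ∧
      (u ((2 ^ (3 + 4 * k) - 1 : ℤ)))⁻¹ = (c + 2) ^ ((2 : ℝ) ^ (3 + 4 * k) - 1) ∧
      (u (-(2 ^ (3 + 4 * k) - 1 : ℤ)))⁻¹ = (c + 2) ^ ((2 : ℝ) ^ (3 + 4 * k) - 1)) ∧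
    (¬ ∃ M' : ℝ, 0 ≤ M' ∧ ∀ N : ℕ, u (N : ℤ) ≤ M' * (c + 1) ^ N) ∧
    (¬ ∃ M' : ℝ, 0 ≤ M' ∧ ∀ N : ℕ, (u (N : ℤ))⁻¹ ≤ M' * (c + 1) ^ N) ∧
    (¬ ∃ M' : ℝ, 0 ≤ M' ∧ ∀ N : ℕ, u (-(N : ℤ)) ≤ M' * (c + 1) ^ N) ∧
    (¬ ∃ M' : ℝ, 0 ≤ M' ∧ ∀ N : ℕ, (u (-(N : ℤ)))⁻¹ ≤ M' * (c + 1) ^ N) := by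
  have hc2 : (0 : ℝ) ≤ c + 2 := by linarith
  -- basic abs facts
  have habs : ∀ j : ℕ, |((2 ^ j - 1 : ℤ) : ℝ)| = (2 : ℝ) ^ j - 1 := by
    intro j
    have h1 : (1 : ℝ) ≤ 2 ^ j := one_le_pow₀ (by norm_num : (1:ℝ) ≤ 2)
    push_cast
    rw [abs_of_nonneg (by linarith)]
  have habsneg : ∀ j : ℕ, |((-(2 ^ j - 1) : ℤ) : ℝ)| = (2 : ℝ) ^ j - 1 := by
    intro j
    push_cast
    rw [abs_neg]
    have := habs j
    push_cast at this
    exact this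
  -- values at n_k and m_k
  have hval1 : ∀ k : ℕ, ∀ n : ℤ, |(n : ℝ)| = (2 : ℝ) ^ (1 + 4 * k) - 1 →
      u n = (c + 2) ^ ((2 : ℝ) ^ (1 + 4 * k) - 1) := by
    intro k n hn
    rw [uval' c u hu (1 + 4 * k) n hn]
    have := sin1' k
    push_cast at this ⊢
    rw [this, mul_one]
  have hval3 : ∀ k : ℕ, ∀ n : ℤ, |(n : ℝ)| = (2 : ℝ) ^ (3 + 4 * k) - 1 →
      (u n)⁻¹ = (c + 2) ^ ((2 : ℝ) ^ (3 + 4 * k) - 1) := by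
    intro k n hn
    rw [uval' c u hu (3 + 4 * k) n hn]
    have := sin3' k
    push_cast at this ⊢
    rw [this, mul_neg_one, Real.rpow_neg hc2, inv_inv]
  have hmain : ∀ k : ℕ, 1 ≤ k →
      u ((2 ^ (1 + 4 * k) - 1 : ℤ)) = (c + 2) ^ ((2 : ℝ) ^ (1 + 4 * k) - 1) ∧
      u (-(2 ^ (1 + 4 * k) - 1 : ℤ)) = (c + 2) ^ ((2 : ℝ) ^ (1 + 4 * k) - 1) ∧
      (u ((2 ^ (3 + 4 * k) - 1 : ℤ)))⁻¹ = (c + 2) ^ ((2 : ℝ) ^ (3 + 4 * k) - 1) ∧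
      (u (-(2 ^ (3 + 4 * k) - 1 : ℤ)))⁻¹ = (c + 2) ^ ((2 : ℝ) ^ (3 + 4 * k) - 1) := by
    intro k hk
    exact ⟨hval1 k _ (habs _), hval1 k _ (habsneg _), hval3 k _ (habs _), hval3 k _ (habsneg _)⟩
  refine ⟨hmain, ?_, ?_, ?_, ?_⟩
  -- shared arithmetic: for each n, pick N
  · apply no_bound' c hc
    intro n
    refine ⟨2 ^ (1 + 4 * (n + 1)) - 1, ?_, ?_⟩
    · have h1 : n < 2 ^ n := n.lt_two_pow_self
      have h2 : 2 ^ n ≤ 2 ^ (1 + 4 * (n + 1)) := Nat.pow_le_pow_right (by norm_num) (by omega)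
      omega
    · have hco : (((2 ^ (1 + 4 * (n + 1)) - 1 : ℕ) : ℤ)) = (2 ^ (1 + 4 * (n + 1)) - 1 : ℤ) := by
        have : 1 ≤ 2 ^ (1 + 4 * (n + 1)) := Nat.one_le_two_pow
        push_cast [this]
        ring
      have hcr : (((2 ^ (1 + 4 * (n + 1)) - 1 : ℕ) : ℝ)) = (2 : ℝ) ^ (1 + 4 * (n + 1)) - 1 := by
        have : 1 ≤ 2 ^ (1 + 4 * (n + 1)) := Nat.one_le_two_pow
        push_cast [this]
        ring
      rw [hco, hcr]
      exact hval1 (n + 1) _ (habs _)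
  · apply no_bound' c hc
    intro n
    refine ⟨2 ^ (3 + 4 * (n + 1)) - 1, ?_, ?_⟩
    · have h1 : n < 2 ^ n := n.lt_two_pow_self
      have h2 : 2 ^ n ≤ 2 ^ (3 + 4 * (n + 1)) := Nat.pow_le_pow_right (by norm_num) (by omega)
      omega
    · have hco : (((2 ^ (3 + 4 * (n + 1)) - 1 : ℕ) : ℤ)) = (2 ^ (3 + 4 * (n + 1)) - 1 : ℤ) := by
        have : 1 ≤ 2 ^ (3 + 4 * (n + 1)) := Nat.one_le_two_pow
        push_cast [this]
        ring
      have hcr : (((2 ^ (3 + 4 * (n + 1)) - 1 : ℕ) : ℝ)) = (2 : ℝ) ^ (3 + 4 * (n + 1)) - 1 := by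
        have : 1 ≤ 2 ^ (3 + 4 * (n + 1)) := Nat.one_le_two_pow
        push_cast [this]
        ring
      rw [hco, hcr]
      exact hval3 (n + 1) _ (habs _)
  · apply no_bound' c hc
    intro n
    refine ⟨2 ^ (1 + 4 * (n + 1)) - 1, ?_, ?_⟩
    · have h1 : n < 2 ^ n := n.lt_two_pow_self
      have h2 : 2 ^ n ≤ 2 ^ (1 + 4 * (n + 1)) := Nat.pow_le_pow_right (by norm_num) (by omega)
      omega
    · have hco : (-((2 ^ (1 + 4 * (n + 1)) - 1 : ℕ) : ℤ)) = -(2 ^ (1 + 4 * (n + 1)) - 1 : ℤ) := by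
        have : 1 ≤ 2 ^ (1 + 4 * (n + 1)) := Nat.one_le_two_pow
        push_cast [this]
        ring
      have hcr : (((2 ^ (1 + 4 * (n + 1)) - 1 : ℕ) : ℝ)) = (2 : ℝ) ^ (1 + 4 * (n + 1)) - 1 := by
        have : 1 ≤ 2 ^ (1 + 4 * (n + 1)) := Nat.one_le_two_pow
        push_cast [this]
        ring
      rw [hco, hcr]
      exact hval1 (n + 1) _ (habsneg _)
  · apply no_bound' c hc
    intro n
    refine ⟨2 ^ (3 + 4 * (n + 1)) - 1, ?_, ?_⟩
    · have h1 : n < 2 ^ n := n.lt_two_pow_self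
      have h2 : 2 ^ n ≤ 2 ^ (3 + 4 * (n + 1)) := Nat.pow_le_pow_right (by norm_num) (by omega)
      omega
    · have hco : (-((2 ^ (3 + 4 * (n + 1)) - 1 : ℕ) : ℤ)) = -(2 ^ (3 + 4 * (n + 1)) - 1 : ℤ) := by
        have : 1 ≤ 2 ^ (3 + 4 * (n + 1)) := Nat.one_le_two_pow
        push_cast [this]
        ring
      have hcr : (((2 ^ (3 + 4 * (n + 1)) - 1 : ℕ) : ℝ)) = (2 : ℝ) ^ (3 + 4 * (n + 1)) - 1 := by
        have : 1 ≤ 2 ^ (3 + 4 * (n + 1)) := Nat.one_le_two_pow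
        push_cast [this]
        ring
      rw [hco, hcr]
      exact hval3 (n + 1) _ (habsneg _)
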